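/- Riccati-parametrized solutions of the double-imaged class, cases 1 and 2 of its classification. Let δ ≠ 0 and q, b1 be real constants, set Δ = q⁴/4 − δ·b1, let J ⊆ ℝ be an open interval and let χ: J → ℝ be a differentiable function satisfying the Riccati equation χ'(t) = Δ − χ(t)² for all t ∈ J. Then the function w(t,x) = −( q² + 2χ(t) )·e^{−qx}/(2δ) satisfies w_t(t,x) = w_{xx}(t,x) + δ·e^{qx}·w(t,x)² + b1·e^{−qx} for all (t,x) ∈ J×ℝ. -/

import Mathlib

open Real Set

/-- Riccati-parametrized solutions of the double-imaged class, cases 1 and 2 of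
its classification. -/
theorem double_imaged_riccati_solutions
    (δ q b1 : ℝ) (hδ : δ ≠ 0)
    (Δ : ℝ) (hΔ : Δ = q ^ 4 / 4 - δ * b1)
    (J : Set ℝ) (hJ : IsOpen J) (hJc : J.OrdConnected)
    (χ : ℝ → ℝ)
    (hχ : ∀ t ∈ J, HasDerivAt χ (Δ - χ t ^ 2) t)
    (w : ℝ → ℝ → ℝ)
    (hw : ∀ t x : ℝ,
      w t x = -((q ^ 2 + 2 * χ t) * Real.exp (-(q * x)) / (2 * δ))) :
    ∀ t ∈ J, ∀ x : ℝ,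
      deriv (fun s => w s x) t
        = deriv (fun y => deriv (fun z => w t z) y) x
          + δ * Real.exp (q * x) * w t x ^ 2 + b1 * Real.exp (-(q * x)) := by
  intro t ht x
  have hχt := hχ t ht
  -- time derivative
  have hT : HasDerivAt (fun s => w s x)
      (-(2 * (Δ - χ t ^ 2) * Real.exp (-(q * x)) / (2 * δ))) t := by
    have h1 : HasDerivAt (fun s => q ^ 2 + 2 * χ s) (2 * (Δ - χ t ^ 2)) t := by
      exact (hχt.const_mul 2).const_add (q ^ 2)
    have h2 : HasDerivAt (fun s => -((q ^ 2 + 2 * χ s) * Real.exp (-(q * x)) / (2 * δ)))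
        (-(2 * (Δ - χ t ^ 2) * Real.exp (-(q * x)) / (2 * δ))) t :=
      ((h1.mul_const _).div_const _).neg
    exact h2.congr_of_eventuallyEq (Filter.Eventually.of_forall fun s => hw s x)
  -- spatial derivatives
  have hE : ∀ y : ℝ, HasDerivAt (fun z => Real.exp (-(q * z)))
      (Real.exp (-(q * y)) * -q) y := by
    intro y
    have h0 : HasDerivAt (fun z : ℝ => -(q * z)) (-q) y := by
      have := ((hasDerivAt_id y).const_mul q).neg
      simp only [mul_one] at this
      exact this
    simpa using h0.exp
  have hX : ∀ y : ℝ, HasDerivAt (fun z => w t z)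
      (-((q ^ 2 + 2 * χ t) * (Real.exp (-(q * y)) * -q) / (2 * δ))) y := by
    intro y
    have h2 : HasDerivAt (fun z => -((q ^ 2 + 2 * χ t) * Real.exp (-(q * z)) / (2 * δ)))
        (-((q ^ 2 + 2 * χ t) * (Real.exp (-(q * y)) * -q) / (2 * δ))) y :=
      (((hE y).const_mul _).div_const _).neg
    exact h2.congr_of_eventuallyEq (Filter.Eventually.of_forall fun z => hw t z)
  have hderivx : deriv (fun z => w t z)
      = fun y => -((q ^ 2 + 2 * χ t) * (Real.exp (-(q * y)) * -q) / (2 * δ)) :=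
    funext fun y => (hX y).deriv
  have hX2 : HasDerivAt (fun y => -((q ^ 2 + 2 * χ t) * (Real.exp (-(q * y)) * -q) / (2 * δ)))
      (-((q ^ 2 + 2 * χ t) * ((Real.exp (-(q * x)) * -q) * -q) / (2 * δ))) x := by
    have := (((hE x).mul_const (-q)).const_mul (q ^ 2 + 2 * χ t)).div_const (2 * δ)
    exact this.neg
  rw [hT.deriv, hderivx, hX2.deriv, hw, hΔ]
  have hexp : Real.exp (-(q * x)) = (Real.exp (q * x))⁻¹ := by
    rw [← Real.exp_neg]
  rw [hexp]
  field_simp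
  ring
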